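/- Let (S, U, S₁) be jointly distributed according to a probability measure π(ds,du,ds₁) on 𝕊 × 𝕌 × 𝕊 whose disintegration is π(ds)γ(du|s)η(ds₁|s,u), and whose two marginals on the first and third coordinates coincide (both equal π(ds)). Define the Bellman operator T^γ f(s) := ∫_𝕌 (c(s,u) + β ∫ f(s₁) η(ds₁|s,u)) γ(du|s) for f ∈ L²(π), where c is bounded measurable and 0 < β < 1, and let Π denote the L²(π)-orthogonal projection onto the span of finitely many basis functions in L²(π). Then Π ∘ T^γ is a β-contraction on L²(π) and admits a unique fixed point. -/

import Mathlib

open MeasureTheory ProbabilityTheory ENNReal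

lemma aux_cs {α : Type*} [MeasurableSpace α] (μ : Measure α) [IsProbabilityMeasure μ]
    {f : α → ℝ≥0∞} (hf : Measurable f) :
    (∫⁻ a, f a ∂μ) ^ (2:ℝ) ≤ ∫⁻ a, f a ^ (2:ℝ) ∂μ := by
  have hpq : Real.HolderConjugate 2 2 := Real.HolderConjugate.two_two
  have h := ENNReal.lintegral_mul_le_Lp_mul_Lq μ hpq hf.aemeasurable
    (aemeasurable_const (b := (1:ℝ≥0∞)))
  simp only [Pi.mul_apply, mul_one, ENNReal.one_rpow, lintegral_const, measure_univ,
    one_mul] at h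
  calc (∫⁻ a, f a ∂μ) ^ (2:ℝ) ≤ ((∫⁻ a, f a ^ (2:ℝ) ∂μ) ^ (1/(2:ℝ))) ^ (2:ℝ) :=
        ENNReal.rpow_le_rpow h (by norm_num)
    _ = ∫⁻ a, f a ^ (2:ℝ) ∂μ := by
        rw [← ENNReal.rpow_mul]; norm_num

theorem stmt_4 {𝕊 𝕌 : Type*} [MeasurableSpace 𝕊] [MeasurableSpace 𝕌]
    (π : Measure 𝕊) [IsProbabilityMeasure π]
    (γ : Kernel 𝕊 𝕌) [IsMarkovKernel γ]
    (η : Kernel (𝕊 × 𝕌) 𝕊) [IsMarkovKernel η]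
    (c : 𝕊 × 𝕌 → ℝ) (hcmeas : Measurable c) (Cc : ℝ) (hcbd : ∀ x, |c x| ≤ Cc)
    (β : ℝ) (hβ0 : 0 < β) (hβ1 : β < 1)
    -- the marginal of `π(ds) γ(du|s) η(ds₁|s,u)` on the third coordinate is again `π`:
    (hinv : (π.bind fun s => ((γ s).bind fun u => η (s, u))) = π)
    {d : ℕ} (φ : Fin d → Lp ℝ 2 π)
    (K : Submodule ℝ (Lp ℝ 2 π)) (hK : K = Submodule.span ℝ (Set.range φ))
    [K.HasOrthogonalProjection]
    -- `T` is (a representative in `L²(π)` of) the Bellman operator `T^γ`: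
    (T : Lp ℝ 2 π → Lp ℝ 2 π)
    (hT : ∀ f : Lp ℝ 2 π, (T f : 𝕊 → ℝ) =ᵐ[π]
      fun s => ∫ u, (c (s, u) + β * ∫ s₁, f s₁ ∂(η (s, u))) ∂(γ s)) :
    (∀ f g : Lp ℝ 2 π,
      ‖(K.orthogonalProjectionOnto (T f) : Lp ℝ 2 π) - (K.orthogonalProjectionOnto (T g) : Lp ℝ 2 π)‖
        ≤ β * ‖f - g‖) ∧
    ∃! f : Lp ℝ 2 π, (K.orthogonalProjectionOnto (T f) : Lp ℝ 2 π) = f := by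
  classical
  -- the composed kernel `s ↦ ∫ γ(du|s) η(·|s,u)`
  set κK : Kernel 𝕊 𝕊 := Kernel.map (γ.compProd η) Prod.snd with hκK
  have hηu : ∀ s : 𝕊, Measurable fun u : 𝕌 => η (s, u) :=
    fun s => η.measurable.comp measurable_prodMk_left
  have hκ : ∀ s, κK s = (γ s).bind fun u => η (s, u) := by
    intro s
    ext A hA
    rw [hκK, Kernel.map_apply _ measurable_snd, Measure.map_apply measurable_snd hA,
      Kernel.compProd_apply (measurable_snd hA), Measure.bind_apply hA (hηu s).aemeasurable]
    rfl
  have hmeasκ : Measurable fun s => (γ s).bind fun u => η (s, u) := by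
    have : (fun s => (γ s).bind fun u => η (s, u)) = fun s => κK s :=
      funext fun s => (hκ s).symm
    rw [this]; exact κK.measurable
  have hprob : ∀ s, IsProbabilityMeasure (κK s) := fun s => ⟨by
    rw [hκ s, Measure.bind_apply MeasurableSet.univ (hηu s).aemeasurable]; simp⟩
  -- invariance in terms of lintegrals
  have Ilem : ∀ {q : 𝕊 → ℝ≥0∞}, Measurable q →
      ∫⁻ s, (∫⁻ s₁, q s₁ ∂(κK s)) ∂π = ∫⁻ s₁, q s₁ ∂π := by
    intro q hq
    have h2 : ∫⁻ s, (∫⁻ s₁, q s₁ ∂((γ s).bind fun u => η (s, u))) ∂π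
        = ∫⁻ s₁, q s₁ ∂π := by
      rw [← Measure.lintegral_bind hmeasκ.aemeasurable hq.aemeasurable, hinv]
    rw [← h2]
    exact lintegral_congr fun s => by rw [hκ s]
  -- null sets of `π` are a.e. null for `κK s`
  have hnull : ∀ {N : Set 𝕊}, MeasurableSet N → π N = 0 → ∀ᵐ s ∂π, κK s N = 0 := by
    intro N hN h0
    have h1 : ∫⁻ s, κK s N ∂π = 0 := by
      have h2 : ∫⁻ s, ((γ s).bind fun u => η (s, u)) N ∂π = 0 := by
        rw [← Measure.bind_apply hN hmeasκ.aemeasurable, hinv, h0]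
      rw [← h2]
      exact lintegral_congr fun s => by rw [hκ s]
    exact (lintegral_eq_zero_iff (κK.measurable_coe hN)).mp h1
  -- a.e. equality transfers through the kernels
  have hae : ∀ {X Xm : 𝕊 → ℝ}, X =ᵐ[π] Xm →
      ∀ᵐ s ∂π, ∀ᵐ u ∂(γ s), X =ᵐ[η (s, u)] Xm := by
    intro X Xm hXX
    set N := toMeasurable π {a | X a ≠ Xm a} with hNdef
    have hN : MeasurableSet N := measurableSet_toMeasurable _ _
    have h0 : π N = 0 := by rw [hNdef, measure_toMeasurable]; exact hXX
    filter_upwards [hnull hN h0] with s hs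
    rw [hκ s, Measure.bind_apply hN (hηu s).aemeasurable] at hs
    have h3 := (lintegral_eq_zero_iff
      ((η.measurable_coe hN).comp measurable_prodMk_left)).mp hs
    filter_upwards [h3] with u hu
    exact measure_mono_null (subset_toMeasurable _ _) hu
  -- finiteness of the iterated integral of an L¹ function
  have hfin : ∀ {Xm : 𝕊 → ℝ}, Measurable Xm → MemLp Xm 1 π →
      ∀ᵐ s ∂π, ∫⁻ u, ∫⁻ s₁, ‖Xm s₁‖₊ ∂(η (s, u)) ∂(γ s) < ∞ := by
    intro Xm hXm hX1
    have hq : Measurable fun s₁ => (‖Xm s₁‖₊ : ℝ≥0∞) := hXm.nnnorm.coe_nnreal_ennreal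
    have hlt : ∫⁻ s₁, ‖Xm s₁‖₊ ∂π < ∞ := by
      have h4 := hX1.2
      rwa [eLpNorm_one_eq_lintegral_enorm] at h4
    have hae' : ∀ᵐ s ∂π, ∫⁻ s₁, ‖Xm s₁‖₊ ∂(κK s) < ∞ := by
      refine ae_lt_top hq.lintegral_kernel ?_
      rw [Ilem hq]; exact hlt.ne
    filter_upwards [hae'] with s hs
    rwa [hκ s, Measure.lintegral_bind (hηu s).aemeasurable hq.aemeasurable] at hs
  -- main contraction estimate for `T`
  have hTT : ∀ f g : Lp ℝ 2 π, ‖T f - T g‖ ≤ β * ‖f - g‖ := by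
    intro f g
    set Fm := (Lp.aestronglyMeasurable f).mk ⇑f with hFmdef
    set Gm := (Lp.aestronglyMeasurable g).mk ⇑g with hGmdef
    have hFmm : StronglyMeasurable Fm := (Lp.aestronglyMeasurable f).stronglyMeasurable_mk
    have hGmm : StronglyMeasurable Gm := (Lp.aestronglyMeasurable g).stronglyMeasurable_mk
    have hFeq : ⇑f =ᵐ[π] Fm := (Lp.aestronglyMeasurable f).ae_eq_mk
    have hGeq : ⇑g =ᵐ[π] Gm := (Lp.aestronglyMeasurable g).ae_eq_mk
    have hFm1 : MemLp Fm 1 π :=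
      ((memLp_congr_ae hFeq).mp (Lp.memLp f)).mono_exponent (by norm_num)
    have hGm1 : MemLp Gm 1 π :=
      ((memLp_congr_ae hGeq).mp (Lp.memLp g)).mono_exponent (by norm_num)
    set hmf : 𝕊 → ℝ := fun s₁ => Fm s₁ - Gm s₁ with hhmf
    have hmm : Measurable hmf := hFmm.measurable.sub hGmm.measurable
    have hq1 : Measurable fun s₁ => (‖hmf s₁‖₊ : ℝ≥0∞) := hmm.nnnorm.coe_nnreal_ennreal
    set D : 𝕊 → ℝ := fun s => β * ∫ u, (∫ s₁, hmf s₁ ∂(η (s, u))) ∂(γ s) with hD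
    -- strong measurability of the inner integral maps
    have hsmF : StronglyMeasurable fun p : 𝕊 × 𝕌 => ∫ s₁, Fm s₁ ∂(η p) :=
      StronglyMeasurable.integral_kernel_prod_right'
        (hFmm.comp_measurable measurable_snd : StronglyMeasurable fun q : (𝕊 × 𝕌) × 𝕊 => Fm q.2)
    have hsmG : StronglyMeasurable fun p : 𝕊 × 𝕌 => ∫ s₁, Gm s₁ ∂(η p) :=
      StronglyMeasurable.integral_kernel_prod_right'
        (hGmm.comp_measurable measurable_snd : StronglyMeasurable fun q : (𝕊 × 𝕌) × 𝕊 => Gm q.2)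
    have hmeasIF : ∀ s : 𝕊, Measurable fun u => ∫⁻ s₁, (‖Fm s₁‖₊ : ℝ≥0∞) ∂(η (s, u)) :=
      fun s => Measurable.lintegral_kernel_prod_right''
        (hFmm.measurable.nnnorm.coe_nnreal_ennreal.comp
          (measurable_snd : Measurable fun q : 𝕌 × 𝕊 => q.2))
    have hmeasIG : ∀ s : 𝕊, Measurable fun u => ∫⁻ s₁, (‖Gm s₁‖₊ : ℝ≥0∞) ∂(η (s, u)) :=
      fun s => Measurable.lintegral_kernel_prod_right''
        (hGmm.measurable.nnnorm.coe_nnreal_ennreal.comp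
          (measurable_snd : Measurable fun q : 𝕌 × 𝕊 => q.2))
    -- Step 1 : `T f - T g` agrees a.e. with `D`
    have hDeq : (⇑(T f - T g) : 𝕊 → ℝ) =ᵐ[π] D := by
      filter_upwards [Lp.coeFn_sub (T f) (T g), hT f, hT g, hae hFeq, hae hGeq,
        hfin hFmm.measurable hFm1, hfin hGmm.measurable hGm1]
        with s hsub hTf hTg haeF haeG hfF hfG
      have hintc : Integrable (fun u => c (s, u)) (γ s) := by
        refine Integrable.mono' (integrable_const Cc)
          ((hcmeas.comp measurable_prodMk_left).aestronglyMeasurable) ?_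
        exact Filter.Eventually.of_forall fun u => by
          simpa [Real.norm_eq_abs] using hcbd (s, u)
      have hFI : Integrable (fun u => ∫ s₁, Fm s₁ ∂(η (s, u))) (γ s) := by
        refine ⟨(hsmF.comp_measurable measurable_prodMk_left).aestronglyMeasurable, ?_⟩
        exact lt_of_le_of_lt
          (lintegral_mono fun u => enorm_integral_le_lintegral_enorm _) hfF
      have hGI : Integrable (fun u => ∫ s₁, Gm s₁ ∂(η (s, u))) (γ s) := by
        refine ⟨(hsmG.comp_measurable measurable_prodMk_left).aestronglyMeasurable, ?_⟩
        exact lt_of_le_of_lt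
          (lintegral_mono fun u => enorm_integral_le_lintegral_enorm _) hfG
      have haeIntF : ∀ᵐ u ∂(γ s), Integrable Fm (η (s, u)) := by
        filter_upwards [ae_lt_top (hmeasIF s) hfF.ne] with u hu
        exact ⟨hFmm.aestronglyMeasurable, hu⟩
      have haeIntG : ∀ᵐ u ∂(γ s), Integrable Gm (η (s, u)) := by
        filter_upwards [ae_lt_top (hmeasIG s) hfG.ne] with u hu
        exact ⟨hGmm.aestronglyMeasurable, hu⟩
      have e1 : (∫ u, (c (s, u) + β * ∫ s₁, f s₁ ∂(η (s, u))) ∂(γ s))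
          = ∫ u, (c (s, u) + β * ∫ s₁, Fm s₁ ∂(η (s, u))) ∂(γ s) := by
        refine integral_congr_ae ?_
        filter_upwards [haeF] with u hu
        rw [integral_congr_ae hu]
      have e2 : (∫ u, (c (s, u) + β * ∫ s₁, g s₁ ∂(η (s, u))) ∂(γ s))
          = ∫ u, (c (s, u) + β * ∫ s₁, Gm s₁ ∂(η (s, u))) ∂(γ s) := by
        refine integral_congr_ae ?_
        filter_upwards [haeG] with u hu
        rw [integral_congr_ae hu]
      have e3 : (∫ u, (c (s, u) + β * ∫ s₁, Fm s₁ ∂(η (s, u))) ∂(γ s))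
          = (∫ u, c (s, u) ∂(γ s)) + β * ∫ u, (∫ s₁, Fm s₁ ∂(η (s, u))) ∂(γ s) := by
        rw [integral_add hintc (hFI.const_mul β), integral_const_mul]
      have e4 : (∫ u, (c (s, u) + β * ∫ s₁, Gm s₁ ∂(η (s, u))) ∂(γ s))
          = (∫ u, c (s, u) ∂(γ s)) + β * ∫ u, (∫ s₁, Gm s₁ ∂(η (s, u))) ∂(γ s) := by
        rw [integral_add hintc (hGI.const_mul β), integral_const_mul]
      have e5 : (∫ u, (∫ s₁, Fm s₁ ∂(η (s, u))) ∂(γ s))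
            - (∫ u, (∫ s₁, Gm s₁ ∂(η (s, u))) ∂(γ s))
          = ∫ u, (∫ s₁, hmf s₁ ∂(η (s, u))) ∂(γ s) := by
        rw [← integral_sub hFI hGI]
        refine integral_congr_ae ?_
        filter_upwards [haeIntF, haeIntG] with u h1 h2
        exact (integral_sub h1 h2).symm
      rw [hsub]
      simp only [Pi.sub_apply]
      rw [hTf, hTg, e1, e2, e3, e4]
      have hDs : D s = β * ∫ u, (∫ s₁, hmf s₁ ∂(η (s, u))) ∂(γ s) := rfl
      rw [hDs, ← e5]; ring
    -- Step 2 : pointwise bound for `D`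
    have hDbound : ∀ s, (‖D s‖₊ : ℝ≥0∞) ≤ (‖β‖₊ : ℝ≥0∞) * ∫⁻ s₁, ‖hmf s₁‖₊ ∂(κK s) := by
      intro s
      rw [hκ s, Measure.lintegral_bind (hηu s).aemeasurable hq1.aemeasurable]
      calc (‖D s‖₊ : ℝ≥0∞)
          = (‖β‖₊ : ℝ≥0∞) * ‖∫ u, (∫ s₁, hmf s₁ ∂(η (s, u))) ∂(γ s)‖₊ := by
            rw [hD]; simp only [nnnorm_mul, ENNReal.coe_mul]
        _ ≤ (‖β‖₊ : ℝ≥0∞) * ∫⁻ u, ‖∫ s₁, hmf s₁ ∂(η (s, u))‖₊ ∂(γ s) :=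
            mul_le_mul_right (enorm_integral_le_lintegral_enorm _) _
        _ ≤ (‖β‖₊ : ℝ≥0∞) * ∫⁻ u, ∫⁻ s₁, ‖hmf s₁‖₊ ∂(η (s, u)) ∂(γ s) :=
            mul_le_mul_right (lintegral_mono fun u => enorm_integral_le_lintegral_enorm _) _
    -- Step 3 : the `L²` estimate
    have hhm_eq : (⇑(f - g) : 𝕊 → ℝ) =ᵐ[π] hmf := by
      filter_upwards [Lp.coeFn_sub f g, hFeq, hGeq] with s h1 h2 h3
      rw [h1]; simp only [Pi.sub_apply, hhmf, h2, h3]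
    have hkey : eLpNorm D 2 π ≤ (‖β‖₊ : ℝ≥0∞) * eLpNorm (⇑(f - g)) 2 π := by
      rw [eLpNorm_congr_ae hhm_eq,
        eLpNorm_eq_lintegral_rpow_enorm_toReal two_ne_zero ENNReal.ofNat_ne_top,
        eLpNorm_eq_lintegral_rpow_enorm_toReal two_ne_zero ENNReal.ofNat_ne_top]
      simp only [ENNReal.toReal_ofNat]
      have hmeasJ : Measurable fun s => ∫⁻ s₁, (‖hmf s₁‖₊ : ℝ≥0∞) ∂(κK s) :=
        hq1.lintegral_kernel
      calc (∫⁻ s, (‖D s‖₊ : ℝ≥0∞) ^ (2:ℝ) ∂π) ^ (1/(2:ℝ))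
          ≤ (∫⁻ s, ((‖β‖₊ : ℝ≥0∞) * ∫⁻ s₁, ‖hmf s₁‖₊ ∂(κK s)) ^ (2:ℝ) ∂π) ^ (1/(2:ℝ)) := by
            refine ENNReal.rpow_le_rpow (lintegral_mono fun s => ?_) (by norm_num)
            exact ENNReal.rpow_le_rpow (hDbound s) (by norm_num)
        _ = ((‖β‖₊ : ℝ≥0∞) ^ (2:ℝ)
              * ∫⁻ s, (∫⁻ s₁, ‖hmf s₁‖₊ ∂(κK s)) ^ (2:ℝ) ∂π) ^ (1/(2:ℝ)) := by
            rw [← lintegral_const_mul _ (hmeasJ.pow_const _)]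
            congr 1
            refine lintegral_congr fun s => ?_
            rw [ENNReal.mul_rpow_of_nonneg _ _ (by norm_num : (0:ℝ) ≤ 2)]
        _ ≤ ((‖β‖₊ : ℝ≥0∞) ^ (2:ℝ)
              * ∫⁻ s, (∫⁻ s₁, (‖hmf s₁‖₊ : ℝ≥0∞) ^ (2:ℝ) ∂(κK s)) ∂π) ^ (1/(2:ℝ)) := by
            refine ENNReal.rpow_le_rpow (mul_le_mul_right (lintegral_mono fun s => ?_) _)
              (by norm_num)
            haveI := hprob s
            exact aux_cs (κK s) hq1
        _ = ((‖β‖₊ : ℝ≥0∞) ^ (2:ℝ)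
              * ∫⁻ s₁, (‖hmf s₁‖₊ : ℝ≥0∞) ^ (2:ℝ) ∂π) ^ (1/(2:ℝ)) := by
            rw [Ilem (hq1.pow_const _)]
        _ = (‖β‖₊ : ℝ≥0∞) * (∫⁻ s₁, (‖hmf s₁‖₊ : ℝ≥0∞) ^ (2:ℝ) ∂π) ^ (1/(2:ℝ)) := by
            rw [ENNReal.mul_rpow_of_nonneg _ _ (by norm_num : (0:ℝ) ≤ 1/2),
              ← ENNReal.rpow_mul]
            norm_num
    have hne : (‖β‖₊ : ℝ≥0∞) * eLpNorm (⇑(f - g)) 2 π ≠ ∞ :=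
      ENNReal.mul_ne_top ENNReal.coe_ne_top (Lp.eLpNorm_ne_top _)
    calc ‖T f - T g‖ = (eLpNorm D 2 π).toReal := by
          rw [Lp.norm_def, eLpNorm_congr_ae hDeq]
      _ ≤ ((‖β‖₊ : ℝ≥0∞) * eLpNorm (⇑(f - g)) 2 π).toReal := ENNReal.toReal_mono hne hkey
      _ = β * ‖f - g‖ := by
          rw [ENNReal.toReal_mul, Lp.norm_def, ENNReal.coe_toReal, coe_nnnorm,
            Real.norm_eq_abs, abs_of_pos hβ0]
  -- Conclusion
  have part1 : ∀ f g : Lp ℝ 2 π,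
      ‖(K.orthogonalProjectionOnto (T f) : Lp ℝ 2 π) - (K.orthogonalProjectionOnto (T g) : Lp ℝ 2 π)‖
        ≤ β * ‖f - g‖ := by
    intro f g
    have h1 : ‖(K.orthogonalProjectionOnto (T f) : Lp ℝ 2 π)
        - (K.orthogonalProjectionOnto (T g) : Lp ℝ 2 π)‖
        = ‖K.orthogonalProjectionOnto (T f) - K.orthogonalProjectionOnto (T g)‖ := rfl
    rw [h1, ← map_sub]
    calc ‖K.orthogonalProjectionOnto (T f - T g)‖
        ≤ ‖(K.orthogonalProjectionOnto : Lp ℝ 2 π →L[ℝ] K)‖ * ‖T f - T g‖ :=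
          K.orthogonalProjectionOnto.le_opNorm _
      _ ≤ 1 * ‖T f - T g‖ := by gcongr; exact Submodule.orthogonalProjectionOnto_norm_le K
      _ = ‖T f - T g‖ := one_mul _
      _ ≤ β * ‖f - g‖ := hTT f g
  refine ⟨part1, ?_⟩
  set F0 : Lp ℝ 2 π → Lp ℝ 2 π := fun x => (K.orthogonalProjectionOnto (T x) : Lp ℝ 2 π) with hF0
  have hLip : LipschitzWith β.toNNReal F0 := by
    refine LipschitzWith.of_dist_le_mul fun x y => ?_
    rw [dist_eq_norm, dist_eq_norm]
    simpa [hF0, Real.coe_toNNReal β hβ0.le] using part1 x y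
  have hC : ContractingWith β.toNNReal F0 := ⟨Real.toNNReal_lt_one.mpr hβ1, hLip⟩
  haveI : Nonempty (Lp ℝ 2 π) := ⟨0⟩
  exact ⟨ContractingWith.fixedPoint F0 hC, hC.fixedPoint_isFixedPt,
    fun y hy => hC.fixedPoint_unique hy⟩
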